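/- Let f : [0,1] → [0,1] be a topologically mixing continuous map and let A(f) be the set of those endpoints e ∈ {0,1} that have no preimage under any iterate of f in the open interval (0,1). Then exactly one of the following holds: A(f) = ∅; A(f) = {0} and f(0) = 0; A(f) = {1} and f(1) = 1; A(f) = {0,1} with f(0) = 0 and f(1) = 1; or A(f) = {0,1} with f(0) = 1 and f(1) = 0. Moreover, if I ⊆ [0,1] is a closed interval with I ∩ A(f) = ∅, then for any nonempty open U there exists n such that f^m(U) ⊇ I for all m > n. -/

import Mathlib

open Set Function

/-- Topological mixing of `f` on `[0,1]` (relative topology). -/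
def MixingOnI (f : ℝ → ℝ) : Prop :=
  ∀ U V : Set ℝ, IsOpen U → IsOpen V → (U ∩ Icc 0 1).Nonempty →
    (V ∩ Icc 0 1).Nonempty → ∃ N : ℕ, ∀ n ≥ N, (f^[n] '' (U ∩ Icc 0 1) ∩ V).Nonempty

/-- The set of endpoints of `[0,1]` having no preimage under any iterate of `f`
inside `(0,1)`. -/
def EndSet (f : ℝ → ℝ) : Set ℝ :=
  {e | e ∈ ({0, 1} : Set ℝ) ∧ ∀ n : ℕ, ∀ x ∈ Ioo (0:ℝ) 1, f^[n] x ≠ e}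

section helpers
variable {f : ℝ → ℝ}

/-- every point of `[0,1]` is in the image of every iterate. -/
lemma endpoint_surj (hf : ContinuousOn f (Icc 0 1)) (hmaps : MapsTo f (Icc 0 1) (Icc 0 1))
    (hmix : MixingOnI f) {e : ℝ} (he : e ∈ Icc (0:ℝ) 1) (n : ℕ) :
    ∃ x ∈ Icc (0:ℝ) 1, f^[n] x = e := by
  have hK : IsCompact (f^[n] '' Icc 0 1) :=
    isCompact_Icc.image_of_continuousOn (hf.iterate hmaps n)
  have hcl : e ∈ closure (f^[n] '' Icc 0 1) := by
    rw [Metric.mem_closure_iff]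
    intro ε hε
    obtain ⟨N, hN⟩ := hmix univ (Metric.ball e ε) isOpen_univ Metric.isOpen_ball
      (by simp [Set.Nonempty]; exact ⟨0, le_refl 0, zero_le_one⟩) ⟨e, Metric.mem_ball_self hε, he⟩
    obtain ⟨y, ⟨x, hx, hxy⟩, hyV⟩ := hN (max N n) (le_max_left _ _)
    refine ⟨y, ?_, ?_⟩
    · have : max N n = n + (max N n - n) := by omega
      rw [this, Function.iterate_add_apply] at hxy
      exact ⟨f^[max N n - n] x, hmaps.iterate _ hx.2, hxy⟩
    · rw [dist_comm]; exact hyV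
  have := hK.isClosed.closure_subset hcl
  obtain ⟨x, hx, hxe⟩ := this
  exact ⟨x, hx, hxe⟩

/-- if `e ∈ EndSet f` then every iterate-preimage of `e` in `[0,1]` lies in `{0,1}`,
and such a preimage exists. -/
lemma endset_preim (hf : ContinuousOn f (Icc 0 1)) (hmaps : MapsTo f (Icc 0 1) (Icc 0 1))
    (hmix : MixingOnI f) {e : ℝ} (he : e ∈ EndSet f) (n : ℕ) :
    ∃ x, (x = 0 ∨ x = 1) ∧ f^[n] x = e := by
  have he01 : e ∈ Icc (0:ℝ) 1 := by
    rcases he.1 with h | h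
    · subst h; exact ⟨le_refl _, zero_le_one⟩
    · rw [mem_singleton_iff] at h; subst h; exact ⟨zero_le_one, le_refl _⟩
  obtain ⟨x, hx, hxe⟩ := endpoint_surj hf hmaps hmix he01 n
  rcases eq_or_lt_of_le hx.1 with h0 | h0
  · exact ⟨x, Or.inl h0.symm, hxe⟩
  rcases eq_or_lt_of_le hx.2 with h1 | h1
  · exact ⟨x, Or.inr h1, hxe⟩
  · exact absurd hxe (he.2 n x ⟨h0, h1⟩)

end helpers

section helpers2
variable {f : ℝ → ℝ}

lemma cover_point (hf : ContinuousOn f (Icc 0 1)) (hmaps : MapsTo f (Icc 0 1) (Icc 0 1))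
    (hmix : MixingOnI f) {c d : ℝ} (hcd : c < d) (hJ : Icc c d ⊆ Icc 0 1)
    {z : ℝ} (hz : z ∈ Ioo (0:ℝ) 1) :
    ∃ N, ∀ m ≥ N, z ∈ f^[m] '' Icc c d := by
  have hc01 : c ∈ Icc (0:ℝ) 1 := hJ ⟨le_refl c, hcd.le⟩
  have hd01 : d ∈ Icc (0:ℝ) 1 := hJ ⟨hcd.le, le_refl d⟩
  have hUne : (Ioo c d ∩ Icc 0 1).Nonempty :=
    ⟨(c+d)/2, ⟨by linarith, by linarith⟩, hJ ⟨by linarith, by linarith⟩⟩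
  obtain ⟨hz0, hz1⟩ := hz
  obtain ⟨N1, h1⟩ := hmix (Ioo c d) (Ioo 0 z) isOpen_Ioo isOpen_Ioo hUne
    ⟨z/2, ⟨by linarith, by linarith⟩, by constructor <;> linarith⟩
  obtain ⟨N2, h2⟩ := hmix (Ioo c d) (Ioo z 1) isOpen_Ioo isOpen_Ioo hUne
    ⟨(z+1)/2, ⟨by linarith, by linarith⟩, by constructor <;> linarith⟩
  refine ⟨max N1 N2, fun m hm => ?_⟩
  obtain ⟨p, hpI, hpV⟩ := h1 m (le_trans (le_max_left _ _) hm)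
  obtain ⟨q, hqI, hqV⟩ := h2 m (le_trans (le_max_right _ _) hm)
  have hsub : f^[m] '' (Ioo c d ∩ Icc 0 1) ⊆ f^[m] '' Icc c d :=
    image_mono (fun y hy => inter_subset_left hy |> Ioo_subset_Icc_self)
  have hconn : IsPreconnected (f^[m] '' Icc c d) :=
    isPreconnected_Icc.image _ ((hf.iterate hmaps m).mono hJ)
  exact hconn.ordConnected.out (hsub hpI) (hsub hqI) ⟨hpV.2.le, hqV.1.le⟩

lemma not_endset (hne : (e : ℝ) ∉ EndSet f) (he : e ∈ ({0,1} : Set ℝ)) :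
    ∃ n : ℕ, ∃ x ∈ Ioo (0:ℝ) 1, f^[n] x = e := by
  have : ¬ ∀ n : ℕ, ∀ x ∈ Ioo (0:ℝ) 1, f^[n] x ≠ e := fun hP => hne ⟨he, hP⟩
  push_neg at this
  exact this

lemma reach_le (hf : ContinuousOn f (Icc 0 1)) (hmaps : MapsTo f (Icc 0 1) (Icc 0 1))
    (hmix : MixingOnI f) {c d a b : ℝ} (hcd : c < d) (hJ : Icc c d ⊆ Icc 0 1)
    (hab : a ≤ b) (hsub : Icc a b ⊆ Icc 0 1) (hdisj : Icc a b ∩ EndSet f = ∅) :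
    ∃ N k, ∀ m ≥ N, ∃ y ∈ f^[m + k] '' Icc c d, y ≤ a := by
  have ha01 : a ∈ Icc (0:ℝ) 1 := hsub ⟨le_refl a, hab⟩
  have hUne : (Ioo c d ∩ Icc 0 1).Nonempty :=
    ⟨(c+d)/2, ⟨by linarith, by linarith⟩, hJ ⟨by linarith, by linarith⟩⟩
  rcases eq_or_lt_of_le ha01.1 with ha0 | ha0
  · -- a = 0
    have h0mem : (0:ℝ) ∈ Icc a b := ⟨ha0.ge, by linarith⟩
    have h0ne : (0:ℝ) ∉ EndSet f := fun h => by
      have : (0:ℝ) ∈ Icc a b ∩ EndSet f := ⟨h0mem, h⟩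
      rw [hdisj] at this; exact this
    obtain ⟨n, x, hx, hfx⟩ := not_endset h0ne (by simp)
    obtain ⟨N, hN⟩ := cover_point hf hmaps hmix hcd hJ hx
    refine ⟨N, n, fun m hm => ?_⟩
    obtain ⟨w, hw, hwx⟩ := hN m hm
    refine ⟨0, ⟨w, hw, ?_⟩, by linarith⟩
    rw [add_comm, Function.iterate_add_apply, hwx, hfx]
  · -- a > 0
    obtain ⟨N, hN⟩ := hmix (Ioo c d) (Ioo 0 a) isOpen_Ioo isOpen_Ioo hUne
      ⟨a/2, ⟨by linarith, by linarith⟩, by constructor <;> [linarith; linarith [ha01.2]]⟩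
    refine ⟨N, 0, fun m hm => ?_⟩
    obtain ⟨y, hyI, hyV⟩ := hN m hm
    refine ⟨y, ?_, hyV.2.le⟩
    rw [add_zero]
    exact image_mono (fun t ht => inter_subset_left ht |> Ioo_subset_Icc_self) hyI

lemma reach_ge (hf : ContinuousOn f (Icc 0 1)) (hmaps : MapsTo f (Icc 0 1) (Icc 0 1))
    (hmix : MixingOnI f) {c d a b : ℝ} (hcd : c < d) (hJ : Icc c d ⊆ Icc 0 1)
    (hab : a ≤ b) (hsub : Icc a b ⊆ Icc 0 1) (hdisj : Icc a b ∩ EndSet f = ∅) :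
    ∃ N k, ∀ m ≥ N, ∃ y ∈ f^[m + k] '' Icc c d, b ≤ y := by
  have hb01 : b ∈ Icc (0:ℝ) 1 := hsub ⟨hab, le_refl b⟩
  have hUne : (Ioo c d ∩ Icc 0 1).Nonempty :=
    ⟨(c+d)/2, ⟨by linarith, by linarith⟩, hJ ⟨by linarith, by linarith⟩⟩
  rcases eq_or_lt_of_le hb01.2 with hb1 | hb1
  · -- b = 1
    have h1mem : (1:ℝ) ∈ Icc a b := ⟨hb1 ▸ hab, hb1.ge⟩
    have h1ne : (1:ℝ) ∉ EndSet f := fun h => by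
      have : (1:ℝ) ∈ Icc a b ∩ EndSet f := ⟨h1mem, h⟩
      rw [hdisj] at this; exact this
    obtain ⟨n, x, hx, hfx⟩ := not_endset h1ne (by simp)
    obtain ⟨N, hN⟩ := cover_point hf hmaps hmix hcd hJ hx
    refine ⟨N, n, fun m hm => ?_⟩
    obtain ⟨w, hw, hwx⟩ := hN m hm
    refine ⟨1, ⟨w, hw, ?_⟩, hb1.le⟩
    rw [add_comm, Function.iterate_add_apply, hwx, hfx]
  · -- b < 1
    obtain ⟨N, hN⟩ := hmix (Ioo c d) (Ioo b 1) isOpen_Ioo isOpen_Ioo hUne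
      ⟨(b+1)/2, ⟨by linarith, by linarith⟩, by constructor <;> linarith [hb01.1]⟩
    refine ⟨N, 0, fun m hm => ?_⟩
    obtain ⟨y, hyI, hyV⟩ := hN m hm
    refine ⟨y, ?_, hyV.1.le⟩
    rw [add_zero]
    exact image_mono (fun t ht => inter_subset_left ht |> Ioo_subset_Icc_self) hyI

end helpers2


theorem stmt_11 (f : ℝ → ℝ) (hf : ContinuousOn f (Icc 0 1))
    (hmaps : MapsTo f (Icc 0 1) (Icc 0 1)) (hmix : MixingOnI f) :
    (EndSet f = ∅ ∨
      (EndSet f = {0} ∧ f 0 = 0) ∨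
      (EndSet f = {1} ∧ f 1 = 1) ∨
      (EndSet f = {0, 1} ∧ f 0 = 0 ∧ f 1 = 1) ∨
      (EndSet f = {0, 1} ∧ f 0 = 1 ∧ f 1 = 0)) ∧
    ∀ a b : ℝ, Icc a b ⊆ Icc 0 1 → Icc a b ∩ EndSet f = ∅ →
      ∀ U : Set ℝ, IsOpen U → (U ∩ Icc 0 1).Nonempty →
        ∃ n : ℕ, ∀ m > n, Icc a b ⊆ f^[m] '' (U ∩ Icc 0 1) := by
  have preim : ∀ e ∈ EndSet f, ∃ x, (x = 0 ∨ x = 1) ∧ f x = e := by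
    intro e he
    obtain ⟨x, hx, hxe⟩ := endset_preim hf hmaps hmix he 1
    exact ⟨x, hx, by rwa [Function.iterate_one] at hxe⟩
  constructor
  · -- classification
    by_cases h0 : (0:ℝ) ∈ EndSet f <;> by_cases h1 : (1:ℝ) ∈ EndSet f
    · -- both
      have hset : EndSet f = {0, 1} := by
        apply Subset.antisymm (fun e he => he.1)
        rintro e (rfl | rfl)
        · exact h0
        · exact h1
      obtain ⟨x0, hx0, hx0e⟩ := preim 0 h0
      obtain ⟨x1, hx1, hx1e⟩ := preim 1 h1
      rcases hx0 with rfl | rfl <;> rcases hx1 with rfl | rfl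
      · rw [hx0e] at hx1e; norm_num at hx1e
      · exact Or.inr (Or.inr (Or.inr (Or.inl ⟨hset, hx0e, hx1e⟩)))
      · exact Or.inr (Or.inr (Or.inr (Or.inr ⟨hset, hx1e, hx0e⟩)))
      · rw [hx0e] at hx1e; norm_num at hx1e
    · -- only 0
      have hset : EndSet f = {0} := by
        apply Subset.antisymm
        · intro e he
          rcases he.1 with h | h
          · exact h
          · rw [mem_singleton_iff] at h; subst h; exact absurd he h1
        · rintro e rfl; exact h0
      refine Or.inr (Or.inl ⟨hset, ?_⟩)
      obtain ⟨x0, hx0, hx0e⟩ := preim 0 h0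
      rcases hx0 with rfl | rfl
      · exact hx0e
      · exfalso
        obtain ⟨n, y, hy, hfy⟩ := not_endset h1 (by simp)
        exact h0.2 (n + 1) y hy (by rw [Function.iterate_succ_apply', hfy, hx0e])
    · -- only 1
      have hset : EndSet f = {1} := by
        apply Subset.antisymm
        · intro e he
          rcases he.1 with h | h
          · subst h; exact absurd he h0
          · exact h
        · rintro e rfl; exact h1
      refine Or.inr (Or.inr (Or.inl ⟨hset, ?_⟩))
      obtain ⟨x1, hx1, hx1e⟩ := preim 1 h1
      rcases hx1 with rfl | rfl
      · exfalso
        obtain ⟨n, y, hy, hfy⟩ := not_endset h0 (by simp)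
        exact h1.2 (n + 1) y hy (by rw [Function.iterate_succ_apply', hfy, hx1e])
      · exact hx1e
    · -- neither
      refine Or.inl (eq_empty_iff_forall_notMem.mpr fun e he => ?_)
      rcases he.1 with h | h
      · subst h; exact h0 he
      · rw [mem_singleton_iff] at h; subst h; exact h1 he
  · -- covering property
    intro a b hsub hdisj U hU hUne
    by_cases hab : a ≤ b
    · -- choose a nondegenerate closed interval J = Icc c d inside U ∩ Icc 0 1
      obtain ⟨x, hxU, hx01⟩ := hUne
      obtain ⟨ε, hε, hball⟩ := Metric.isOpen_iff.mp hU x hxU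
      set ε' : ℝ := min (ε / 2) (1 / 2) with hε'def
      have hε'pos : 0 < ε' := lt_min (by linarith) (by norm_num)
      have hε'lt : ε' < ε := lt_of_le_of_lt (min_le_left _ _) (by linarith)
      set c : ℝ := max 0 (x - ε') with hcdef
      set d : ℝ := min 1 (x + ε') with hddef
      have hcd : c < d := by
        rcases le_total 0 (x - ε') with h | h
        · calc c = x - ε' := max_eq_right h
            _ < x := by linarith
            _ ≤ d := le_min hx01.2 (by linarith)
        · have hc0 : c = 0 := max_eq_left h
          rw [hc0]
          exact lt_min one_pos (by linarith [hx01.1])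
      have hJ01 : Icc c d ⊆ Icc (0:ℝ) 1 := fun y hy =>
        ⟨le_trans (le_max_left 0 _) hy.1, le_trans hy.2 (min_le_left 1 _)⟩
      have hJU : Icc c d ⊆ U := by
        intro y hy
        apply hball
        rw [Metric.mem_ball, Real.dist_eq]
        have h1 : x - ε' ≤ y := le_trans (le_max_right 0 _) hy.1
        have h2 : y ≤ x + ε' := le_trans hy.2 (min_le_right 1 _)
        rw [abs_lt]
        constructor <;> linarith
      have hJsub : Icc c d ⊆ U ∩ Icc 0 1 := fun y hy => ⟨hJU hy, hJ01 hy⟩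
      obtain ⟨Na, ka, hNa⟩ := reach_le hf hmaps hmix hcd hJ01 hab hsub hdisj
      obtain ⟨Nb, kb, hNb⟩ := reach_ge hf hmaps hmix hcd hJ01 hab hsub hdisj
      refine ⟨Na + ka + Nb + kb, fun m hm => ?_⟩
      obtain ⟨y, hy, hya⟩ := hNa (m - ka) (by omega)
      obtain ⟨y', hy', hy'b⟩ := hNb (m - kb) (by omega)
      have e1 : m - ka + ka = m := by omega
      have e2 : m - kb + kb = m := by omega
      rw [e1] at hy
      rw [e2] at hy'
      intro t ht
      have hconn : IsPreconnected (f^[m] '' Icc c d) :=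
        isPreconnected_Icc.image _ ((hf.iterate hmaps m).mono hJ01)
      have : t ∈ f^[m] '' Icc c d :=
        hconn.ordConnected.out hy hy' ⟨le_trans hya ht.1, le_trans ht.2 hy'b⟩
      exact image_mono hJsub this
    · refine ⟨0, fun m _ => ?_⟩
      rw [Set.Icc_eq_empty hab]
      exact empty_subset _
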